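/- arXiv:1612.09082 — 3 statements merged into one kernel-verified Lean document; each statement's English description precedes it below -/
import Mathlib

section
/- Let k ∈ [0,1), let k* be the dual modulus with (k*)² = −k²/(1−k²), and let θ̄ ∈ (0,π/2). Then sc(θ̄·2K(k)/π | k) · sc((π/2−θ̄)·2K(k*)/π | k*) = 1. Equivalently, the Z-invariant Ising coupling constants satisfy the Kramers–Wannier duality relation sinh(2J(θ̄|k))·sinh(2J(π/2−θ̄|k*)) = 1, so the Z-invariant Ising model with modulus k on an isoradial graph and the one with modulus k* on the dual isoradial graph are dual to each other. -/
open Real Filter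

/-- Complete elliptic integral of the first kind `K`, as a function of the
squared modulus `m = k²`. -/
noncomputable def ellK (m : ℝ) : ℝ :=
  ∫ τ in (0:ℝ)..(π/2), 1 / Real.sqrt (1 - m * Real.sin τ ^ 2)

/-- The incomplete elliptic integral of the first kind
`φ ↦ ∫₀^φ (1 - k² sin² t)^{-1/2} dt`, as a function of the squared modulus `m = k²`. -/
noncomputable def amF (m φ : ℝ) : ℝ :=
  ∫ t in (0:ℝ)..φ, 1 / Real.sqrt (1 - m * Real.sin t ^ 2)

/-- Jacobi's amplitude, the inverse of `amF m`, squared modulus `m = k²`. -/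
noncomputable def am (m u : ℝ) : ℝ := Function.invFun (amF m) u

/-- Jacobi elliptic function `sn`, squared modulus `m = k²`. -/
noncomputable def sn (u m : ℝ) : ℝ := Real.sin (am m u)

/-- Jacobi elliptic function `cn`, squared modulus `m = k²`. -/
noncomputable def cn (u m : ℝ) : ℝ := Real.cos (am m u)

/-- Jacobi elliptic function `dn`, squared modulus `m = k²`. -/
noncomputable def dn (u m : ℝ) : ℝ := Real.sqrt (1 - m * sn u m ^ 2)

/-- Jacobi elliptic function `sc = sn/cn`, squared modulus `m = k²`. -/
noncomputable def sc (u m : ℝ) : ℝ := sn u m / cn u m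

lemma aux_pos {m : ℝ} (hm : m < 1) (t : ℝ) : 0 < 1 - m * Real.sin t ^ 2 := by
  rcases le_or_gt m 0 with h | h
  · nlinarith [sq_nonneg (Real.sin t)]
  · nlinarith [Real.sin_sq_le_one t, sq_nonneg (Real.sin t)]

lemma aux_cont {m : ℝ} (hm : m < 1) :
    Continuous (fun t => 1 / Real.sqrt (1 - m * Real.sin t ^ 2)) := by
  apply continuous_const.div
  · exact Real.continuous_sqrt.comp (by continuity)
  · intro t
    exact (Real.sqrt_pos.mpr (aux_pos hm t)).ne'

lemma amF_sub {m : ℝ} (hm : m < 1) (a b : ℝ) :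
    amF m b - amF m a = ∫ t in a..b, 1 / Real.sqrt (1 - m * Real.sin t ^ 2) :=
  intervalIntegral.integral_interval_sub_left
    ((aux_cont hm).intervalIntegrable 0 b) ((aux_cont hm).intervalIntegrable 0 a)

lemma amF_strictMono {m : ℝ} (hm : m < 1) : StrictMono (amF m) := by
  intro a b hab
  have hpos : (0:ℝ) < ∫ t in a..b, 1 / Real.sqrt (1 - m * Real.sin t ^ 2) :=
    intervalIntegral.intervalIntegral_pos_of_pos ((aux_cont hm).intervalIntegrable a b)
      (fun t => div_pos one_pos (Real.sqrt_pos.mpr (aux_pos hm t))) hab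
  have := amF_sub hm a b
  linarith

lemma amF_zero (m : ℝ) : amF m 0 = 0 := intervalIntegral.integral_same

lemma am_eq {m : ℝ} (hm : m < 1) {θ φ : ℝ} (h : amF m φ = θ) : am m θ = φ := by
  have h2 : amF m (am m θ) = θ := Function.invFun_eq ⟨φ, h⟩
  exact (amF_strictMono hm).injective (h2.trans h.symm)

lemma exists_phi {m : ℝ} (hm : m < 1) {θ : ℝ} (h0 : 0 < θ) (h1 : θ < ellK m) :
    ∃ φ ∈ Set.Ioo (0:ℝ) (π/2), amF m φ = θ := by
  have hc : Continuous (amF m) :=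
    intervalIntegral.continuous_primitive (fun a b => (aux_cont hm).intervalIntegrable a b) 0
  have hmem : θ ∈ Set.Ioo (amF m 0) (amF m (π/2)) := by
    rw [amF_zero]; exact ⟨h0, h1⟩
  have h := intermediate_value_Ioo (by positivity : (0:ℝ) ≤ π/2) hc.continuousOn hmem
  obtain ⟨φ, hφ, hφθ⟩ := h
  exact ⟨φ, hφ, hφθ⟩

lemma dual_lt_one {m : ℝ} (hm0 : 0 ≤ m) (hm1 : m < 1) : -m/(1-m) < 1 := by
  have : -m/(1-m) ≤ 0 := div_nonpos_iff.mpr (Or.inr ⟨by linarith, by linarith⟩)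
  linarith

lemma key {m : ℝ} (hm0 : 0 ≤ m) (hm1 : m < 1) (φ : ℝ) :
    amF (-m/(1-m)) (π/2) - amF (-m/(1-m)) (π/2 - φ) = Real.sqrt (1-m) * amF m φ := by
  have h1m : (0:ℝ) < 1 - m := by linarith
  have hm' : -m/(1-m) < 1 := dual_lt_one hm0 hm1
  rw [amF_sub hm']
  have hcomp := intervalIntegral.integral_comp_sub_left
    (a := 0) (b := φ) (fun t => 1 / Real.sqrt (1 - (-m/(1-m)) * Real.sin t ^ 2)) (π/2)
  rw [sub_zero] at hcomp
  rw [← hcomp]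
  have hpt : ∀ x : ℝ, 1 / Real.sqrt (1 - (-m/(1-m)) * Real.sin (π/2 - x) ^ 2)
      = Real.sqrt (1-m) * (1 / Real.sqrt (1 - m * Real.sin x ^ 2)) := by
    intro x
    rw [Real.sin_pi_div_two_sub]
    have h1 : 1 - (-m/(1-m)) * Real.cos x ^ 2 = (1 - m * Real.sin x ^ 2) / (1-m) := by
      rw [Real.cos_sq']
      field_simp
      ring
    rw [h1, Real.sqrt_div (aux_pos hm1 x).le, one_div_div, mul_one_div]
  calc (∫ x in (0:ℝ)..φ, 1 / Real.sqrt (1 - (-m/(1-m)) * Real.sin (π/2 - x) ^ 2))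
      = ∫ x in (0:ℝ)..φ, Real.sqrt (1-m) * (1 / Real.sqrt (1 - m * Real.sin x ^ 2)) :=
        intervalIntegral.integral_congr (fun x _ => hpt x)
    _ = Real.sqrt (1-m) * amF m φ := intervalIntegral.integral_const_mul _ _

/-- Kramers–Wannier duality for the Z-invariant Ising coupling constants:
for `k ∈ [0,1)`, dual squared modulus `(k*)² = -k²/(1-k²)` and `θ̄ ∈ (0,π/2)`,
`sc(θ̄·2K(k)/π | k) · sc((π/2-θ̄)·2K(k*)/π | k*) = 1`. -/
theorem Z_invariant_Ising_duality (k θbar : ℝ)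
    (hk : k ∈ Set.Ico (0 : ℝ) 1) (hθ : θbar ∈ Set.Ioo 0 (π / 2)) :
    sc (θbar * (2 * ellK (k ^ 2)) / π) (k ^ 2) *
      sc ((π / 2 - θbar) * (2 * ellK (-k ^ 2 / (1 - k ^ 2))) / π) (-k ^ 2 / (1 - k ^ 2)) = 1 := by
  obtain ⟨hk0, hk1⟩ := hk
  obtain ⟨hθ0, hθ1⟩ := hθ
  set m := k ^ 2 with hm_def
  have hm0 : 0 ≤ m := sq_nonneg k
  have hm1 : m < 1 := by nlinarith
  have h1m : (0:ℝ) < 1 - m := by linarith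
  have hm' : -m/(1-m) < 1 := dual_lt_one hm0 hm1
  have hπ : (0:ℝ) < π := pi_pos
  have hK0 : 0 < ellK m := by
    have := amF_strictMono hm1 (show (0:ℝ) < π/2 by positivity)
    rw [amF_zero] at this
    exact this
  -- ellK of dual modulus
  have hKd : ellK (-m/(1-m)) = Real.sqrt (1-m) * ellK m := by
    have := key hm0 hm1 (π/2)
    rw [sub_self, amF_zero, sub_zero] at this
    exact this
  have hs : (0:ℝ) < Real.sqrt (1-m) := Real.sqrt_pos.mpr h1m
  -- θ and φ
  set θ := θbar * (2 * ellK m) / π with hθdef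
  have hθpos : 0 < θ := by
    apply div_pos _ hπ
    exact mul_pos hθ0 (by linarith)
  have hθlt : θ < ellK m := by
    rw [hθdef, div_lt_iff₀ hπ]
    nlinarith
  obtain ⟨φ, ⟨hφ0, hφ2⟩, hφθ⟩ := exists_phi hm1 hθpos hθlt
  have ham : am m θ = φ := am_eq hm1 hφθ
  -- the dual argument
  have hdual : amF (-m/(1-m)) (π/2 - φ) = (π / 2 - θbar) * (2 * ellK (-m/(1-m))) / π := by
    have hkey := key hm0 hm1 φ
    rw [hφθ] at hkey
    have hKm' : amF (-m/(1-m)) (π/2) = ellK (-m/(1-m)) := rfl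
    rw [hKm'] at hkey
    rw [hKd] at hkey ⊢
    rw [hθdef] at hkey
    field_simp at hkey ⊢
    linarith [hkey]
  have ham' : am (-m/(1-m)) ((π / 2 - θbar) * (2 * ellK (-m/(1-m))) / π) = π/2 - φ :=
    am_eq hm' hdual
  -- final computation
  have hsinφ : 0 < Real.sin φ := Real.sin_pos_of_pos_of_lt_pi hφ0 (by linarith)
  have hcosφ : 0 < Real.cos φ := Real.cos_pos_of_mem_Ioo ⟨by linarith, hφ2⟩
  rw [sc, sc, sn, sn, cn, cn, ham, ham', Real.sin_pi_div_two_sub, Real.cos_pi_div_two_sub]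
  field_simp
end

section
/- Fix θ̄ ∈ (0,π/2). As k → 0, the Z-invariant Ising coupling constant satisfies the expansion J(θ̄|k) = J(θ̄|0) + (k²/8)·sin(θ̄) + O(k⁴), where J(θ̄|k) = (1/2)·log((1 + sn(θ̄·2K(k)/π | k))/cn(θ̄·2K(k)/π | k)) and J(θ̄|0) = (1/2)·log((1 + sin θ̄)/cos θ̄). (This expansion takes into account that θ = θ̄·2K(k)/π itself depends on k, and identifies k² with the deviation β − β_c from the critical inverse temperature.) -/
open Real Filter

open Asymptotics

open MeasureTheory intervalIntegral

lemma abs_sin_sub_sin (a b : ℝ) : |Real.sin a - Real.sin b| ≤ |a - b| := by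
  rw [Real.sin_sub_sin]
  calc |2 * Real.sin ((a - b)/2) * Real.cos ((a + b)/2)|
      = 2 * |Real.sin ((a - b)/2)| * |Real.cos ((a + b)/2)| := by
        rw [abs_mul, abs_mul]; norm_num
    _ ≤ 2 * |(a - b)/2| * 1 :=
        mul_le_mul (mul_le_mul_of_nonneg_left Real.abs_sin_le_abs (by norm_num))
          (Real.abs_cos_le_one _) (abs_nonneg _) (by positivity)
    _ = |a - b| := by rw [abs_div]; simp [abs_of_nonneg]; ring

lemma abs_cos_sub_cos (a b : ℝ) : |Real.cos a - Real.cos b| ≤ |a - b| := by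
  rw [Real.cos_sub_cos]
  calc |(-2) * Real.sin ((a + b)/2) * Real.sin ((a - b)/2)|
      = 2 * |Real.sin ((a + b)/2)| * |Real.sin ((a - b)/2)| := by
        rw [abs_mul, abs_mul]; norm_num
    _ ≤ 2 * 1 * |(a - b)/2| :=
        mul_le_mul (mul_le_mul_of_nonneg_left (Real.abs_sin_le_one _) (by norm_num))
          Real.abs_sin_le_abs (abs_nonneg _) (by norm_num)
    _ = |a - b| := by rw [abs_div]; simp [abs_of_nonneg]; ring

lemma pw_err {x : ℝ} (h0 : 0 ≤ x) (h1 : x ≤ 1/2) :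
    |1 / Real.sqrt (1 - x) - 1 - x/2| ≤ 3 * x^2 := by
  set s := Real.sqrt (1 - x) with hs
  have hs2 : s^2 = 1 - x := Real.sq_sqrt (by linarith)
  have hs7 : (0.7:ℝ) ≤ s := by
    rw [hs]
    rw [show (0.7:ℝ) = Real.sqrt 0.49 by
      rw [show (0.49:ℝ) = 0.7^2 by norm_num, Real.sqrt_sq]; norm_num]
    apply Real.sqrt_le_sqrt; linarith
  have hspos : 0 < s := by linarith
  have hkey : (2 - s*(2+x)) * (2 + s*(2+x)) = 3*x^2 + x^3 := by nlinarith [hs2]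
  have hN0 : 0 ≤ 2 - s*(2+x) := by nlinarith [hs2, sq_nonneg (s*(2+x) - 2)]
  have hNle : 2 - s*(2+x) ≤ 2*x^2 := by nlinarith [hs2]
  have heq : 1 / s - 1 - x/2 = (2 - s*(2+x)) / (2*s) := by
    field_simp; ring
  rw [heq, abs_of_nonneg (div_nonneg hN0 (by positivity))]
  rw [div_le_iff₀ (by positivity)]
  nlinarith

lemma integrand_cont {m : ℝ} (hm0 : 0 ≤ m) (hm : m ≤ 1/2) :
    Continuous (fun t => 1 / Real.sqrt (1 - m * Real.sin t ^ 2)) := by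
  have hpos : ∀ t : ℝ, 0 < 1 - m * Real.sin t ^ 2 := by
    intro t
    nlinarith [Real.sin_sq_le_one t, sq_nonneg (Real.sin t)]
  apply Continuous.div continuous_const
  · exact Real.continuous_sqrt.comp (by continuity)
  · intro t
    exact (Real.sqrt_pos.mpr (hpos t)).ne'

lemma integrand_ge_one {m : ℝ} (hm0 : 0 ≤ m) (hm : m ≤ 1/2) (t : ℝ) :
    1 ≤ 1 / Real.sqrt (1 - m * Real.sin t ^ 2) := by
  have hpos : 0 < 1 - m * Real.sin t ^ 2 := by
    nlinarith [Real.sin_sq_le_one t, sq_nonneg (Real.sin t)]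
  rw [le_div_iff₀ (Real.sqrt_pos.mpr hpos), one_mul]
  calc Real.sqrt (1 - m * Real.sin t ^ 2) ≤ Real.sqrt 1 := by
        apply Real.sqrt_le_sqrt; nlinarith [sq_nonneg (Real.sin t)]
    _ = 1 := Real.sqrt_one

lemma integrand_le {m : ℝ} (hm0 : 0 ≤ m) (hm : m ≤ 1/2) (t : ℝ) :
    1 / Real.sqrt (1 - m * Real.sin t ^ 2) ≤ 1 + m := by
  have hpos : 0 < 1 - m * Real.sin t ^ 2 := by
    nlinarith [Real.sin_sq_le_one t, sq_nonneg (Real.sin t)]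
  have h1m : 1/(1+m) ≤ Real.sqrt (1 - m * Real.sin t ^ 2) := by
    rw [show (1:ℝ)/(1+m) = Real.sqrt ((1/(1+m))^2) by
      rw [Real.sqrt_sq (by positivity)]]
    apply Real.sqrt_le_sqrt
    rw [div_pow]
    rw [div_le_iff₀ (by positivity)]
    have hms : m * Real.sin t ^ 2 ≤ m := by
      nlinarith [Real.sin_sq_le_one t]
    have key : m * Real.sin t ^ 2 * (1+m)^2 ≤ m * (1+m)^2 :=
      mul_le_mul_of_nonneg_right hms (sq_nonneg _)
    nlinarith [key, sq_nonneg m, mul_nonneg hm0 hm0]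
  rw [div_le_iff₀ (Real.sqrt_pos.mpr hpos)]
  calc (1:ℝ) = (1+m) * (1/(1+m)) := by field_simp
    _ ≤ (1+m) * Real.sqrt (1 - m * Real.sin t ^ 2) := by
        apply mul_le_mul_of_nonneg_left h1m (by linarith)

lemma amF_lb {m φ : ℝ} (hm0 : 0 ≤ m) (hm : m ≤ 1/2) (hφ : 0 ≤ φ) :
    φ ≤ amF m φ := by
  have h := intervalIntegral.integral_mono_on (μ := volume) (f := fun _ => (1:ℝ))
    (g := fun t => 1 / Real.sqrt (1 - m * Real.sin t ^ 2)) hφ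
    intervalIntegrable_const ((integrand_cont hm0 hm).intervalIntegrable 0 φ)
    (fun t _ => integrand_ge_one hm0 hm t)
  simp only [intervalIntegral.integral_const, smul_eq_mul, mul_one, sub_zero] at h
  exact h

lemma amF_ub {m φ : ℝ} (hm0 : 0 ≤ m) (hm : m ≤ 1/2) (hφ : 0 ≤ φ) :
    amF m φ ≤ (1 + m) * φ := by
  have h := intervalIntegral.integral_mono_on (μ := volume)
    (f := fun t => 1 / Real.sqrt (1 - m * Real.sin t ^ 2))
    (g := fun _ => (1:ℝ) + m) hφ
    ((integrand_cont hm0 hm).intervalIntegrable 0 φ) intervalIntegrable_const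
    (fun t _ => integrand_le hm0 hm t)
  simp only [intervalIntegral.integral_const, smul_eq_mul, sub_zero] at h
  calc amF m φ ≤ φ * (1 + m) := h
    _ = (1 + m) * φ := by ring

lemma amF_nonpos {m φ : ℝ} (hm0 : 0 ≤ m) (hm : m ≤ 1/2) (hφ : φ ≤ 0) :
    amF m φ ≤ φ := by
  have h := intervalIntegral.integral_mono_on (μ := volume) (f := fun _ => (1:ℝ))
    (g := fun t => 1 / Real.sqrt (1 - m * Real.sin t ^ 2)) hφ
    intervalIntegrable_const ((integrand_cont hm0 hm).intervalIntegrable φ 0)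
    (fun t _ => integrand_ge_one hm0 hm t)
  have hsym : amF m φ = -∫ t in φ..(0:ℝ), 1 / Real.sqrt (1 - m * Real.sin t ^ 2) := by
    rw [amF, intervalIntegral.integral_symm]
  rw [hsym]
  simp only [intervalIntegral.integral_const, smul_eq_mul, mul_one] at h
  linarith

lemma amF_surj {m : ℝ} (hm0 : 0 ≤ m) (hm : m ≤ 1/2) :
    Function.Surjective (amF m) := by
  have hc : Continuous (amF m) :=
    intervalIntegral.continuous_primitive
      (fun a b => (integrand_cont hm0 hm).intervalIntegrable a b) 0
  apply hc.surjective
  · apply tendsto_atTop_mono' _ _ tendsto_id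
    filter_upwards [eventually_ge_atTop (0:ℝ)] with u hu
    exact amF_lb hm0 hm hu
  · apply tendsto_atBot_mono' _ _ tendsto_id
    filter_upwards [eventually_le_atBot (0:ℝ)] with u hu
    exact amF_nonpos hm0 hm hu

lemma amF_expand {m φ : ℝ} (hm0 : 0 ≤ m) (hm : m ≤ 1/2) (hφ : 0 ≤ φ) :
    |amF m φ - φ - m * (φ/2 - Real.sin φ * Real.cos φ / 2) / 2| ≤ 3 * m^2 * φ := by
  have hint1 : IntervalIntegrable (fun t => 1 / Real.sqrt (1 - m * Real.sin t ^ 2))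
      volume 0 φ := (integrand_cont hm0 hm).intervalIntegrable 0 φ
  have hint2 : IntervalIntegrable (fun t => 1 + m/2 * Real.sin t ^ 2) volume 0 φ :=
    (by continuity : Continuous fun t : ℝ => 1 + m/2 * Real.sin t ^ 2).intervalIntegrable 0 φ
  have h2 : (∫ t in (0:ℝ)..φ, (1 + m/2 * Real.sin t ^ 2))
      = φ + m * (φ/2 - Real.sin φ * Real.cos φ / 2) / 2 := by
    rw [intervalIntegral.integral_add intervalIntegrable_const
      ((by continuity : Continuous fun t : ℝ => m/2 * Real.sin t ^ 2).intervalIntegrable 0 φ)]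
    rw [intervalIntegral.integral_const_mul, integral_sin_sq]
    simp; ring
  have hdiff : amF m φ - φ - m * (φ/2 - Real.sin φ * Real.cos φ / 2) / 2
      = ∫ t in (0:ℝ)..φ,
        (1 / Real.sqrt (1 - m * Real.sin t ^ 2) - (1 + m/2 * Real.sin t ^ 2)) := by
    rw [intervalIntegral.integral_sub hint1 hint2, h2]
    unfold amF; ring
  rw [hdiff]
  have hb := intervalIntegral.norm_integral_le_of_norm_le_const (C := 3 * m^2)
    (f := fun t => 1 / Real.sqrt (1 - m * Real.sin t ^ 2) - (1 + m/2 * Real.sin t ^ 2))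
    (a := 0) (b := φ) ?_
  · rw [Real.norm_eq_abs] at hb
    calc |∫ t in (0:ℝ)..φ, (1 / Real.sqrt (1 - m * Real.sin t ^ 2) - (1 + m/2 * Real.sin t ^ 2))|
        ≤ 3 * m^2 * |φ - 0| := hb
      _ = 3 * m^2 * φ := by rw [sub_zero, abs_of_nonneg hφ]
  · intro t _
    rw [Real.norm_eq_abs]
    show |1 / Real.sqrt (1 - m * Real.sin t ^ 2) - (1 + m/2 * Real.sin t ^ 2)| ≤ 3 * m^2
    have hx0 : 0 ≤ m * Real.sin t ^ 2 := by positivity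
    have hx1 : m * Real.sin t ^ 2 ≤ 1/2 := by
      nlinarith [Real.sin_sq_le_one t, sq_nonneg (Real.sin t)]
    have := pw_err hx0 hx1
    have hrw : 1 / Real.sqrt (1 - m * Real.sin t ^ 2) - (1 + m/2 * Real.sin t ^ 2)
        = 1 / Real.sqrt (1 - m * Real.sin t ^ 2) - 1 - (m * Real.sin t ^ 2)/2 := by ring
    rw [hrw]
    calc |1 / Real.sqrt (1 - m * Real.sin t ^ 2) - 1 - (m * Real.sin t ^ 2)/2|
        ≤ 3 * (m * Real.sin t ^ 2)^2 := this
      _ = 3 * m^2 * (Real.sin t ^ 2)^2 := by ring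
      _ ≤ 3 * m^2 * 1 := by
          have h1 := Real.sin_sq_le_one t
          have h2 := sq_nonneg (Real.sin t)
          have h3 : (Real.sin t ^ 2)^2 ≤ 1 := by nlinarith
          nlinarith [mul_le_mul_of_nonneg_left h3 (sq_nonneg m)]
      _ = 3 * m^2 := by ring


set_option maxHeartbeats 1000000 in
/-- Expansion of the Z-invariant Ising coupling constant near criticality:
`J(θ̄|k) = J(θ̄|0) + (k²/8)·sin θ̄ + O(k⁴)` as `k → 0`,
with `J(θ̄|0) = (1/2)·log((1+sin θ̄)/cos θ̄)`. -/
theorem Jcoupling_expansion_near_critical (θbar : ℝ) (hθ : θbar ∈ Set.Ioo 0 (π / 2)) :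
    (fun k : ℝ =>
        (1 / 2) * Real.log
          ((1 + sn (θbar * (2 * ellK (k ^ 2)) / π) (k ^ 2)) /
            cn (θbar * (2 * ellK (k ^ 2)) / π) (k ^ 2))
        - (1 / 2) * Real.log ((1 + Real.sin θbar) / Real.cos θbar)
        - (k ^ 2 / 8) * Real.sin θbar)
      =O[nhds 0] (fun k : ℝ => k ^ 4) := by
  obtain ⟨hθ0, hθπ⟩ := hθ
  have hπ := Real.pi_pos
  have hπ315 := Real.pi_lt_d2
  set ψ : ℝ := (θbar + π/2)/2 with hψ
  have hψ1 : θbar < ψ := by rw [hψ]; linarith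
  have hψ2 : ψ < π/2 := by rw [hψ]; linarith
  have hψ0 : 0 < ψ := by linarith
  have hcψ : 0 < Real.cos ψ := Real.cos_pos_of_mem_Ioo ⟨by linarith, hψ2⟩
  set c : ℝ := Real.cos ψ with hcdef
  clear_value c
  set ε : ℝ := min (1/2) ((π/2 - θbar)/(2*θbar)) with hε
  have hεpos : 0 < ε := lt_min (by norm_num) (div_pos (by linarith) (by linarith))
  rw [Asymptotics.isBigO_iff]
  refine ⟨2/c^2 + 8/c, ?_⟩
  have hball : ∀ᶠ k : ℝ in nhds 0, |k| < Real.sqrt ε := by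
    filter_upwards [Metric.ball_mem_nhds (0:ℝ) (Real.sqrt_pos.mpr hεpos)] with k hk
    simpa [Real.dist_eq] using hk
  filter_upwards [hball] with k hk
  set m : ℝ := k^2 with hmdef
  have hm0 : 0 ≤ m := sq_nonneg k
  clear_value m
  have hmε : m ≤ ε := by
    have h1 : |k|^2 < (Real.sqrt ε)^2 := pow_lt_pow_left₀ hk (abs_nonneg k) (by norm_num)
    rw [Real.sq_sqrt hεpos.le, sq_abs] at h1
    rw [hmdef]; linarith
  have hm2 : m ≤ 1/2 := le_trans hmε (min_le_left _ _)
  have hmθ : m ≤ (π/2 - θbar)/(2*θbar) := le_trans hmε (min_le_right _ _)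
  have hmψ : θbar*(1+m) ≤ ψ := by
    have h1 : m*(2*θbar) ≤ ((π/2 - θbar)/(2*θbar))*(2*θbar) :=
      mul_le_mul_of_nonneg_right hmθ (by positivity)
    rw [div_mul_cancel₀ _ (by positivity : (2:ℝ)*θbar ≠ 0)] at h1
    rw [hψ]; nlinarith
  set u : ℝ := θbar * (2 * ellK m) / π with hu
  set φ : ℝ := am m u with hφdef
  have hEq : amF m φ = u := Function.invFun_eq (amF_surj hm0 hm2 u)
  rw [show sn u m = Real.sin φ from rfl, show cn u m = Real.cos φ from rfl]
  clear_value u φ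
  have hKeq : ellK m = amF m (π/2) := rfl
  have hK1 : π/2 ≤ ellK m := by rw [hKeq]; exact amF_lb hm0 hm2 (by positivity)
  have hK2 : ellK m ≤ (1+m)*(π/2) := by rw [hKeq]; exact amF_ub hm0 hm2 (by positivity)
  have hu1 : θbar ≤ u := by rw [hu, le_div_iff₀ hπ]; nlinarith
  have hu2 : u ≤ θbar*(1+m) := by rw [hu, div_le_iff₀ hπ]; nlinarith
  have hφ0 : 0 < φ := by
    by_contra h
    push_neg at h
    have := amF_nonpos hm0 hm2 h
    rw [hEq] at this; linarith
  have hφle : φ ≤ u := hEq ▸ amF_lb hm0 hm2 hφ0.le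
  have hφub : u ≤ (1+m)*φ := hEq ▸ amF_ub hm0 hm2 hφ0.le
  have hφlo : θbar*(1-m) ≤ φ := by nlinarith
  have hφhi : φ ≤ θbar*(1+m) := le_trans hφle hu2
  have habs : |φ - θbar| ≤ 2*m := by
    rw [abs_le]; constructor <;> nlinarith
  -- expansion of ellK
  have hE2 := amF_expand hm0 hm2 (le_of_lt (by positivity) : (0:ℝ) ≤ π/2)
  rw [Real.sin_pi_div_two, Real.cos_pi_div_two] at hE2
  have hE2' : |ellK m - π/2 - m*π/8| ≤ 3*m^2*(π/2) := by
    rw [hKeq] at *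
    have heq : amF m (π/2) - π/2 - m*π/8
        = amF m (π/2) - π/2 - m * (π/2/2 - 1*0/2)/2 := by ring
    rw [heq]; exact hE2
  have huerr : |u - θbar - m*θbar/4| ≤ 5*m^2 := by
    have hrw : u - θbar - m*θbar/4 = (2*θbar/π) * (ellK m - π/2 - m*π/8) := by
      rw [hu]; field_simp; ring
    rw [hrw, abs_mul]
    have h1 : |2*θbar/π| ≤ 1 := by
      rw [abs_of_nonneg (by positivity), div_le_one hπ]; linarith
    calc |2*θbar/π| * |ellK m - π/2 - m*π/8| ≤ 1 * (3*m^2*(π/2)) :=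
          mul_le_mul h1 hE2' (abs_nonneg _) (by norm_num)
      _ ≤ 5*m^2 := by nlinarith [sq_nonneg m]
  -- expansion at φ
  have hE1 := amF_expand hm0 hm2 hφ0.le
  rw [hEq] at hE1
  have hE1' : |u - φ - m*(φ/2 - Real.sin φ*Real.cos φ/2)/2| ≤ 9*m^2 :=
    le_trans hE1 (by nlinarith [sq_nonneg m])
  -- Lipschitz bound for P
  have hPlip : |(φ/2 - Real.sin φ*Real.cos φ/2) - (θbar/2 - Real.sin θbar*Real.cos θbar/2)|
      ≤ |φ - θbar| := by
    have hs1 : Real.sin φ * Real.cos φ = Real.sin (2*φ)/2 := by rw [Real.sin_two_mul]; ring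
    have hs2 : Real.sin θbar * Real.cos θbar = Real.sin (2*θbar)/2 := by rw [Real.sin_two_mul]; ring
    rw [hs1, hs2]
    have hS : |Real.sin (2*φ) - Real.sin (2*θbar)| ≤ 2*|φ - θbar| := by
      calc |Real.sin (2*φ) - Real.sin (2*θbar)| ≤ |2*φ - 2*θbar| := abs_sin_sub_sin _ _
        _ = 2*|φ - θbar| := by
            rw [show 2*φ - 2*θbar = 2*(φ - θbar) by ring, abs_mul]
            norm_num
    have heq : (φ/2 - Real.sin (2*φ)/2/2) - (θbar/2 - Real.sin (2*θbar)/2/2)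
        = (φ - θbar)/2 - (Real.sin (2*φ) - Real.sin (2*θbar))/4 := by ring
    rw [heq]
    calc |(φ - θbar)/2 - (Real.sin (2*φ) - Real.sin (2*θbar))/4|
        ≤ |(φ - θbar)/2| + |(Real.sin (2*φ) - Real.sin (2*θbar))/4| := abs_sub _ _
      _ = |φ - θbar|/2 + |Real.sin (2*φ) - Real.sin (2*θbar)|/4 := by
          rw [abs_div, abs_div]; norm_num
      _ ≤ |φ - θbar|/2 + (2*|φ - θbar|)/4 := by linarith
      _ = |φ - θbar| := by ring
  -- main second-order bound on φ
  have hB : |φ - θbar - m*(Real.sin θbar*Real.cos θbar)/4| ≤ 16*m^2 := by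
    have hdecomp : φ - θbar - m*(Real.sin θbar*Real.cos θbar)/4
        = (u - θbar - m*θbar/4) - (u - φ - m*(φ/2 - Real.sin φ*Real.cos φ/2)/2)
          + (m/2) * ((θbar/2 - Real.sin θbar*Real.cos θbar/2)
              - (φ/2 - Real.sin φ*Real.cos φ/2)) := by ring
    rw [hdecomp]
    have h3 : |(m/2) * ((θbar/2 - Real.sin θbar*Real.cos θbar/2)
        - (φ/2 - Real.sin φ*Real.cos φ/2))| ≤ 2*m^2 := by
      rw [abs_mul, abs_of_nonneg (by positivity : (0:ℝ) ≤ m/2)]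
      rw [abs_sub_comm]
      calc (m/2) * |(φ/2 - Real.sin φ*Real.cos φ/2) - (θbar/2 - Real.sin θbar*Real.cos θbar/2)|
          ≤ (m/2) * (2*m) := by
            apply mul_le_mul_of_nonneg_left _ (by positivity)
            exact le_trans hPlip habs
        _ = m^2 := by ring
        _ ≤ 2*m^2 := by nlinarith [sq_nonneg m]
    calc |(u - θbar - m*θbar/4) - (u - φ - m*(φ/2 - Real.sin φ*Real.cos φ/2)/2)
          + (m/2) * ((θbar/2 - Real.sin θbar*Real.cos θbar/2) - (φ/2 - Real.sin φ*Real.cos φ/2))|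
        ≤ |(u - θbar - m*θbar/4) - (u - φ - m*(φ/2 - Real.sin φ*Real.cos φ/2)/2)|
          + |(m/2) * ((θbar/2 - Real.sin θbar*Real.cos θbar/2) - (φ/2 - Real.sin φ*Real.cos φ/2))| :=
          abs_add_le _ _
      _ ≤ (|u - θbar - m*θbar/4| + |u - φ - m*(φ/2 - Real.sin φ*Real.cos φ/2)/2|)
          + |(m/2) * ((θbar/2 - Real.sin θbar*Real.cos θbar/2) - (φ/2 - Real.sin φ*Real.cos φ/2))| := by
          have := abs_sub (u - θbar - m*θbar/4) (u - φ - m*(φ/2 - Real.sin φ*Real.cos φ/2)/2)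
          linarith
      _ ≤ (5*m^2 + 9*m^2) + 2*m^2 := by linarith
      _ = 16*m^2 := by ring
  -- region bounds
  have hφψ : φ ≤ ψ := le_trans hφhi hmψ
  have hφ2 : θbar/2 ≤ φ := by nlinarith
  have hcos : ∀ t : ℝ, θbar/2 ≤ t → t ≤ ψ → c ≤ Real.cos t := by
    intro t h1 h2
    rw [hcdef]
    exact Real.cos_le_cos_of_nonneg_of_le_pi (by linarith) (by linarith) h2
  have hcθ : c ≤ Real.cos θbar := hcos θbar (by linarith) (le_of_lt hψ1)
  have hcφ : c ≤ Real.cos φ := hcos φ hφ2 hφψ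
  have hcosθpos : 0 < Real.cos θbar := lt_of_lt_of_le hcψ hcθ
  have hcosφpos : 0 < Real.cos φ := lt_of_lt_of_le hcψ hcφ
  have hsinφ : 0 ≤ Real.sin φ := Real.sin_nonneg_of_nonneg_of_le_pi (by linarith) (by linarith)
  have hsinθ : 0 ≤ Real.sin θbar := Real.sin_nonneg_of_nonneg_of_le_pi (by linarith) (by linarith)
  -- mean value estimate
  set r : ℝ := 1/(2*Real.cos θbar) with hr
  clear_value r
  set s : Set ℝ := Set.uIcc θbar φ with hsdef
  have hsub : s ⊆ Set.Icc (θbar/2) ψ := by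
    intro t ht
    rcases Set.mem_uIcc.mp ht with ⟨h1, h2⟩ | ⟨h1, h2⟩ <;>
      exact ⟨by linarith, by linarith⟩
  have hder : ∀ t ∈ s, HasDerivWithinAt
      (fun t => (1/2)*(Real.log (1+Real.sin t) - Real.log (Real.cos t)) - t*r)
      (1/(2*Real.cos t) - r) s t := by
    intro t ht
    have ht' := hsub ht
    have hcost : 0 < Real.cos t := lt_of_lt_of_le hcψ (hcos t ht'.1 ht'.2)
    have hsint : 0 < 1 + Real.sin t := by
      have := Real.sin_nonneg_of_nonneg_of_le_pi
        (le_trans (by linarith : (0:ℝ) ≤ θbar/2) ht'.1) (by linarith [ht'.2])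
      linarith
    have h1 : HasDerivAt (fun t => 1 + Real.sin t) (Real.cos t) t :=
      (Real.hasDerivAt_sin t).const_add 1
    have h2 : HasDerivAt (fun t => Real.log (1 + Real.sin t))
        (Real.cos t/(1+Real.sin t)) t := h1.log hsint.ne'
    have h3 : HasDerivAt (fun t => Real.log (Real.cos t))
        (-Real.sin t/Real.cos t) t := (Real.hasDerivAt_cos t).log hcost.ne'
    have h4 : HasDerivAt
        (fun t => (1/2)*(Real.log (1+Real.sin t) - Real.log (Real.cos t)) - t*r)
        ((1/2)*(Real.cos t/(1+Real.sin t) - (-Real.sin t/Real.cos t)) - 1*r) t :=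
      ((h2.sub h3).const_mul (1/2)).sub ((hasDerivAt_id t).mul_const r)
    have hpy := Real.sin_sq_add_cos_sq t
    have heq0 : Real.cos t/(1+Real.sin t) + Real.sin t/Real.cos t = 1/Real.cos t := by
      rw [div_add_div _ _ hsint.ne' hcost.ne',
        div_eq_div_iff (mul_ne_zero hsint.ne' hcost.ne') hcost.ne']
      linear_combination Real.cos t * hpy
    have heq : (1/2)*(Real.cos t/(1+Real.sin t) - (-Real.sin t/Real.cos t)) - 1*r
        = 1/(2*Real.cos t) - r := by
      rw [show Real.cos t/(1+Real.sin t) - (-Real.sin t/Real.cos t)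
          = Real.cos t/(1+Real.sin t) + Real.sin t/Real.cos t by ring, heq0]
      ring
    rw [heq] at h4
    exact h4.hasDerivWithinAt
  have hbound : ∀ t ∈ s, ‖1/(2*Real.cos t) - r‖ ≤ (1/(2*c^2))*|φ - θbar| := by
    intro t ht
    have ht' := hsub ht
    have hct : c ≤ Real.cos t := hcos t ht'.1 ht'.2
    have hcost : 0 < Real.cos t := lt_of_lt_of_le hcψ hct
    have htθ : |t - θbar| ≤ |φ - θbar| := by
      rcases Set.mem_uIcc.mp ht with ⟨h1, h2⟩ | ⟨h1, h2⟩
      · rw [abs_of_nonneg (by linarith : (0:ℝ) ≤ t - θbar),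
          abs_of_nonneg (by linarith : (0:ℝ) ≤ φ - θbar)]; linarith
      · rw [abs_of_nonpos (by linarith : t - θbar ≤ 0),
          abs_of_nonpos (by linarith : φ - θbar ≤ 0)]; linarith
    rw [Real.norm_eq_abs, hr]
    have heq : 1/(2*Real.cos t) - 1/(2*Real.cos θbar)
        = (Real.cos θbar - Real.cos t)/(2*Real.cos t*Real.cos θbar) := by
      field_simp
    rw [heq, abs_div, abs_of_nonneg (by positivity : (0:ℝ) ≤ 2*Real.cos t*Real.cos θbar)]
    rw [show (1/(2*c^2))*|φ - θbar| = |φ - θbar|/(2*c^2) by ring]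
    have hprod : c*c ≤ Real.cos t * Real.cos θbar :=
      mul_le_mul hct hcθ hcψ.le (le_trans hcψ.le hct)
    apply div_le_div₀ (abs_nonneg _) _ (by positivity)
      (by rw [pow_two]; linarith [hprod])
    calc |Real.cos θbar - Real.cos t| ≤ |θbar - t| := abs_cos_sub_cos _ _
      _ = |t - θbar| := abs_sub_comm _ _
      _ ≤ |φ - θbar| := htθ
  have hmvt := Convex.norm_image_sub_le_of_norm_hasDerivWithin_le hder hbound
    (convex_uIcc θbar φ) Set.left_mem_uIcc Set.right_mem_uIcc
  have hmvt2 : |((1/2)*(Real.log (1+Real.sin φ) - Real.log (Real.cos φ)) - φ*r)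
      - ((1/2)*(Real.log (1+Real.sin θbar) - Real.log (Real.cos θbar)) - θbar*r)|
      ≤ (1/(2*c^2))*|φ - θbar| * |φ - θbar| := by
    have h := hmvt
    simp only [Real.norm_eq_abs] at h
    exact h
  clear hmvt hder hbound
  -- now the goal
  rw [Real.norm_eq_abs, Real.norm_eq_abs]
  rw [Real.log_div (by linarith : (1:ℝ) + Real.sin φ ≠ 0) hcosφpos.ne',
    Real.log_div (by linarith : (1:ℝ) + Real.sin θbar ≠ 0) hcosθpos.ne']
  have hrm : r*(m*(Real.sin θbar*Real.cos θbar)/4) = (m/8)*Real.sin θbar := by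
    rw [hr]; field_simp; ring
  have hfinal : (1/2)*(Real.log (1+Real.sin φ) - Real.log (Real.cos φ))
      - (1/2)*(Real.log (1+Real.sin θbar) - Real.log (Real.cos θbar)) - (m/8)*Real.sin θbar
      = (((1/2)*(Real.log (1+Real.sin φ) - Real.log (Real.cos φ)) - φ*r)
          - ((1/2)*(Real.log (1+Real.sin θbar) - Real.log (Real.cos θbar)) - θbar*r))
        + r*(φ - θbar - m*(Real.sin θbar*Real.cos θbar)/4) := by
    have hexp : r*(φ - θbar - m*(Real.sin θbar*Real.cos θbar)/4)
        = r*φ - r*θbar - r*(m*(Real.sin θbar*Real.cos θbar)/4) := by ring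
    rw [hexp, hrm]; ring
  have hrle : r ≤ 1/(2*c) := by
    rw [hr]
    apply div_le_div₀ (by norm_num) (le_refl 1) (by positivity) (by linarith)
  have hrpos : 0 < r := by rw [hr]; positivity
  calc |(1/2)*(Real.log (1+Real.sin φ) - Real.log (Real.cos φ))
      - (1/2)*(Real.log (1+Real.sin θbar) - Real.log (Real.cos θbar)) - (m/8)*Real.sin θbar|
      = |(((1/2)*(Real.log (1+Real.sin φ) - Real.log (Real.cos φ)) - φ*r)
          - ((1/2)*(Real.log (1+Real.sin θbar) - Real.log (Real.cos θbar)) - θbar*r))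
        + r*(φ - θbar - m*(Real.sin θbar*Real.cos θbar)/4)| := by rw [hfinal]
    _ ≤ |((1/2)*(Real.log (1+Real.sin φ) - Real.log (Real.cos φ)) - φ*r)
          - ((1/2)*(Real.log (1+Real.sin θbar) - Real.log (Real.cos θbar)) - θbar*r)|
        + |r*(φ - θbar - m*(Real.sin θbar*Real.cos θbar)/4)| := abs_add_le _ _
    _ ≤ (1/(2*c^2))*|φ - θbar| * |φ - θbar| + r * (16*m^2) := by
        have hb2 : |r*(φ - θbar - m*(Real.sin θbar*Real.cos θbar)/4)| ≤ r * (16*m^2) := by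
          rw [abs_mul, abs_of_nonneg hrpos.le]
          exact mul_le_mul_of_nonneg_left hB hrpos.le
        linarith [hmvt2, hb2]
    _ ≤ (1/(2*c^2))*(2*m)*(2*m) + (1/(2*c)) * (16*m^2) := by
        have h1 : (1/(2*c^2))*|φ - θbar| * |φ - θbar| ≤ (1/(2*c^2))*(2*m)*(2*m) := by
          have hc2 : (0:ℝ) < 1/(2*c^2) := by positivity
          have habs2 : |φ - θbar| * |φ - θbar| ≤ (2*m)*(2*m) :=
            mul_le_mul habs habs (abs_nonneg _) (by linarith)
          calc (1/(2*c^2))*|φ - θbar| * |φ - θbar|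
              = (1/(2*c^2))*(|φ - θbar| * |φ - θbar|) := by ring
            _ ≤ (1/(2*c^2))*((2*m)*(2*m)) := mul_le_mul_of_nonneg_left habs2 hc2.le
            _ = (1/(2*c^2))*(2*m)*(2*m) := by ring
        have h2 : r * (16*m^2) ≤ (1/(2*c)) * (16*m^2) :=
          mul_le_mul_of_nonneg_right hrle (by positivity)
        linarith
    _ = (2/c^2 + 8/c) * m^2 := by field_simp; ring
    _ = (2/c^2 + 8/c) * |k^4| := by
        rw [abs_of_nonneg (by positivity : (0:ℝ) ≤ k^4), hmdef]; ring
end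

section
/- Fix θ̄ ∈ (0,π/2). For m ∈ (0,1), define the reciprocal-regime coupling constant J̃(θ̄|m) = (1/2)·log( (1 + √m·sn(θ̄·2K(√m)/π | √m)) / dn(θ̄·2K(√m)/π | √m) ), which is the Z-invariant Ising coupling constant for the reciprocal squared modulus k² = 1/m > 1 under Jacobi's real transformation. Then m ↦ J̃(θ̄|m) is strictly increasing on (0,1), tends to 0 as m → 0⁺ and tends to +∞ as m → 1⁻; equivalently, as k² increases from 1 to +∞ the coupling constant decreases from +∞ to 0, so the reciprocal regime k² > 1 covers the same range of temperatures as k² ∈ (−∞,1) and does not reach a new (e.g., anti-ferromagnetic) regime. -/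
open Real Filter

/-- The reciprocal-regime coupling constant `J̃(θ̄|m)`, i.e., the Z-invariant Ising
coupling constant with reciprocal squared modulus `k² = 1/m > 1` under Jacobi's real
transformation, expressed via the modulus `κ = √m` (squared modulus `m ∈ (0,1)`). -/
noncomputable def Jrec (θbar m : ℝ) : ℝ :=
  (1 / 2) * Real.log
    ((1 + Real.sqrt m * sn (θbar * (2 * ellK m) / π) m) /
      dn (θbar * (2 * ellK m) / π) m)

namespace JrecAux

variable {m : ℝ}

lemma base_pos (hm0 : 0 ≤ m) (hm1 : m < 1) (t : ℝ) : 0 < 1 - m * Real.sin t ^ 2 := by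
  nlinarith [Real.sin_sq_le_one t, sq_nonneg (Real.sin t)]

lemma w_pos (hm0 : 0 ≤ m) (hm1 : m < 1) (t : ℝ) :
    0 < 1 / Real.sqrt (1 - m * Real.sin t ^ 2) := by
  have := Real.sqrt_pos.2 (base_pos hm0 hm1 t)
  positivity

lemma w_cont (hm0 : 0 ≤ m) (hm1 : m < 1) :
    Continuous fun t => 1 / Real.sqrt (1 - m * Real.sin t ^ 2) := by
  apply Continuous.div continuous_const
  · exact Real.continuous_sqrt.comp (by continuity)
  · exact fun t => ne_of_gt (Real.sqrt_pos.2 (base_pos hm0 hm1 t))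

lemma w_intable (hm0 : 0 ≤ m) (hm1 : m < 1) (a b : ℝ) :
    IntervalIntegrable (fun t => 1 / Real.sqrt (1 - m * Real.sin t ^ 2))
      MeasureTheory.volume a b :=
  (w_cont hm0 hm1).intervalIntegrable a b

lemma one_le_w (hm0 : 0 ≤ m) (hm1 : m < 1) (t : ℝ) :
    1 ≤ 1 / Real.sqrt (1 - m * Real.sin t ^ 2) := by
  rw [le_div_iff₀ (Real.sqrt_pos.2 (base_pos hm0 hm1 t))]
  have h2 : 1 - m * Real.sin t ^ 2 ≤ 1 := by nlinarith [sq_nonneg (Real.sin t)]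
  simpa using Real.sqrt_le_one.mpr h2

lemma amF_add (hm0 : 0 ≤ m) (hm1 : m < 1) (a b : ℝ) :
    amF m b = amF m a + ∫ t in a..b, 1 / Real.sqrt (1 - m * Real.sin t ^ 2) :=
  (intervalIntegral.integral_add_adjacent_intervals (w_intable hm0 hm1 0 a)
    (w_intable hm0 hm1 a b)).symm

lemma amF_strictMono (hm0 : 0 ≤ m) (hm1 : m < 1) : StrictMono (amF m) := by
  intro a b hab
  have h2 : 0 < ∫ t in a..b, 1 / Real.sqrt (1 - m * Real.sin t ^ 2) :=
    intervalIntegral.intervalIntegral_pos_of_pos_on (w_intable hm0 hm1 a b)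
      (fun x _ => w_pos hm0 hm1 x) hab
  have := amF_add hm0 hm1 a b
  linarith

lemma amF_zero : amF m 0 = 0 := intervalIntegral.integral_same

lemma le_amF (hm0 : 0 ≤ m) (hm1 : m < 1) {φ : ℝ} (hφ : 0 ≤ φ) : φ ≤ amF m φ := by
  have h : ∫ t in (0:ℝ)..φ, (1:ℝ) ≤ amF m φ :=
    intervalIntegral.integral_mono_on hφ (intervalIntegrable_const) (w_intable hm0 hm1 0 φ)
      (fun x _ => one_le_w hm0 hm1 x)
  simpa using h

lemma amF_le (hm0 : 0 ≤ m) (hm1 : m < 1) {φ : ℝ} (hφ : φ ≤ 0) : amF m φ ≤ φ := by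
  have h : ∫ t in φ..(0:ℝ), (1:ℝ) ≤ ∫ t in φ..(0:ℝ), 1 / Real.sqrt (1 - m * Real.sin t ^ 2) :=
    intervalIntegral.integral_mono_on hφ (intervalIntegrable_const) (w_intable hm0 hm1 φ 0)
      (fun x _ => one_le_w hm0 hm1 x)
  have h2 : amF m φ = - ∫ t in φ..(0:ℝ), 1 / Real.sqrt (1 - m * Real.sin t ^ 2) := by
    rw [amF, intervalIntegral.integral_symm]
  simp only [intervalIntegral.integral_const, smul_eq_mul, mul_one] at h
  linarith

lemma amF_cont (hm0 : 0 ≤ m) (hm1 : m < 1) : Continuous (amF m) :=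
  intervalIntegral.continuous_primitive (w_intable hm0 hm1) 0

lemma amF_surj (hm0 : 0 ≤ m) (hm1 : m < 1) : Function.Surjective (amF m) := by
  apply (amF_cont hm0 hm1).surjective
  · exact tendsto_atTop_mono' atTop
      ((eventually_ge_atTop (0:ℝ)).mono fun x hx => le_amF hm0 hm1 hx) tendsto_id
  · exact tendsto_atBot_mono' atBot
      ((eventually_le_atBot (0:ℝ)).mono fun x hx => amF_le hm0 hm1 hx) tendsto_id

lemma amF_am (hm0 : 0 ≤ m) (hm1 : m < 1) (u : ℝ) : amF m (am m u) = u :=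
  Function.invFun_eq (amF_surj hm0 hm1 u)

lemma am_mem_Ioo (hm0 : 0 ≤ m) (hm1 : m < 1) {u : ℝ} (h0 : 0 < u) (h1 : u < ellK m) :
    am m u ∈ Set.Ioo 0 (π / 2) := by
  have hK : amF m (π/2) = ellK m := rfl
  have h := amF_am hm0 hm1 u
  constructor
  · have := (amF_strictMono hm0 hm1).lt_iff_lt (a := 0) (b := am m u)
    rw [amF_zero] at this
    exact this.1 (by rw [h]; exact h0)
  · have := (amF_strictMono hm0 hm1).lt_iff_lt (a := am m u) (b := π/2)
    rw [hK] at this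
    exact this.1 (by rw [h]; exact h1)

lemma ellK_pos (hm0 : 0 ≤ m) (hm1 : m < 1) : 0 < ellK m := by
  have : amF m 0 < amF m (π/2) := amF_strictMono hm0 hm1 (by positivity)
  rw [amF_zero] at this
  exact this

lemma ratio_le {m₁ m₂ a b : ℝ} (h10 : 0 ≤ m₁) (h12 : m₁ ≤ m₂) (h21 : m₂ < 1)
    (ha : 0 ≤ a) (hab : a ≤ b) (hb : b ≤ 1) :
    (1 / Real.sqrt (1 - m₂ * a)) * (1 / Real.sqrt (1 - m₁ * b)) ≤
      (1 / Real.sqrt (1 - m₁ * a)) * (1 / Real.sqrt (1 - m₂ * b)) := by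
  have k1 : 0 < 1 - m₂ * b := by nlinarith
  have k2 : 0 < 1 - m₁ * b := by nlinarith
  have k3 : 0 < 1 - m₂ * a := by nlinarith
  have k4 : 0 < 1 - m₁ * a := by nlinarith
  rw [div_mul_div_comm, div_mul_div_comm, mul_one, ← Real.sqrt_mul k3.le, ← Real.sqrt_mul k4.le]
  apply one_div_le_one_div_of_le (Real.sqrt_pos.2 (by nlinarith))
  apply Real.sqrt_le_sqrt
  nlinarith

lemma ratio_lt {m₁ m₂ a b : ℝ} (h10 : 0 ≤ m₁) (h12 : m₁ < m₂) (h21 : m₂ < 1)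
    (ha : 0 ≤ a) (hab : a < b) (hb : b ≤ 1) :
    (1 / Real.sqrt (1 - m₂ * a)) * (1 / Real.sqrt (1 - m₁ * b)) <
      (1 / Real.sqrt (1 - m₁ * a)) * (1 / Real.sqrt (1 - m₂ * b)) := by
  have k1 : 0 < 1 - m₂ * b := by nlinarith
  have k2 : 0 < 1 - m₁ * b := by nlinarith
  have k3 : 0 < 1 - m₂ * a := by nlinarith
  have k4 : 0 < 1 - m₁ * a := by nlinarith
  rw [div_mul_div_comm, div_mul_div_comm, mul_one, ← Real.sqrt_mul k3.le, ← Real.sqrt_mul k4.le]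
  apply one_div_lt_one_div_of_lt (Real.sqrt_pos.2 (by nlinarith))
  apply Real.sqrt_lt_sqrt (by positivity)
  nlinarith

lemma sin_sq_mono {t s : ℝ} (ht : 0 ≤ t) (hts : t ≤ s) (hs : s ≤ π / 2) :
    Real.sin t ^ 2 ≤ Real.sin s ^ 2 := by
  have h1 : Real.sin t ≤ Real.sin s := by
    apply Real.strictMonoOn_sin.monotoneOn _ _ hts
    · constructor <;> nlinarith [Real.pi_pos]
    · constructor <;> nlinarith [Real.pi_pos]
  have h2 : 0 ≤ Real.sin t := Real.sin_nonneg_of_nonneg_of_le_pi ht (by nlinarith [Real.pi_pos])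
  nlinarith

lemma sin_sq_smono {t s : ℝ} (ht : 0 ≤ t) (hts : t < s) (hs : s ≤ π / 2) :
    Real.sin t ^ 2 < Real.sin s ^ 2 := by
  have h1 : Real.sin t < Real.sin s := by
    apply Real.strictMonoOn_sin _ _ hts
    · constructor <;> nlinarith [Real.pi_pos]
    · constructor <;> nlinarith [Real.pi_pos]
  have h2 : 0 ≤ Real.sin t := Real.sin_nonneg_of_nonneg_of_le_pi ht (by nlinarith [Real.pi_pos])
  nlinarith

/-- The key comparison: for `0 < φ < π/2` and `0 < m₁ < m₂ < 1`,
`F(φ,m₂) K(m₁) < F(φ,m₁) K(m₂)`. -/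
lemma key_lt {m₁ m₂ : ℝ} (h10 : 0 < m₁) (h12 : m₁ < m₂) (h21 : m₂ < 1)
    {φ : ℝ} (hφ0 : 0 < φ) (hφ : φ < π / 2) :
    amF m₂ φ * ellK m₁ < amF m₁ φ * ellK m₂ := by
  set w₁ : ℝ → ℝ := fun t => 1 / Real.sqrt (1 - m₁ * Real.sin t ^ 2) with hw₁
  set w₂ : ℝ → ℝ := fun t => 1 / Real.sqrt (1 - m₂ * Real.sin t ^ 2) with hw₂
  have hm10 : (0:ℝ) ≤ m₁ := h10.le
  have hm11 : m₁ < 1 := lt_trans h12 h21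
  have hm20 : (0:ℝ) ≤ m₂ := le_trans hm10 h12.le
  set A := amF m₁ φ with hA
  set B := amF m₂ φ with hB
  set C := ∫ t in φ..(π/2), w₁ t with hC
  set D := ∫ t in φ..(π/2), w₂ t with hD
  have hKA : ellK m₁ = A + C := amF_add hm10 hm11 φ (π/2)
  have hKB : ellK m₂ = B + D := amF_add hm20 h21 φ (π/2)
  have hApos : 0 < A :=
    lt_of_lt_of_le (by rw [← amF_zero (m := m₁)]; exact amF_strictMono hm10 hm11 hφ0) le_rfl
  have hCpos : 0 < C :=
    intervalIntegral.intervalIntegral_pos_of_pos_on (w_intable hm10 hm11 φ (π/2))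
      (fun x _ => w_pos hm10 hm11 x) hφ
  -- pointwise sine bounds
  have hsinb : Real.sin φ ^ 2 ≤ 1 := Real.sin_sq_le_one φ
  -- the two weighted comparisons
  set p := w₁ φ with hp
  set q := w₂ φ with hq
  have hppos : 0 < p := w_pos hm10 hm11 φ
  have hqpos : 0 < q := w_pos hm20 h21 φ
  have h1 : B * p < A * q := by
    have hint1 : IntervalIntegrable (fun t => w₁ t * q - w₂ t * p) MeasureTheory.volume 0 φ :=
      (((w_cont hm10 hm11).mul continuous_const).sub
        ((w_cont hm20 h21).mul continuous_const)).intervalIntegrable 0 φ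
    have hpos : 0 < ∫ t in (0:ℝ)..φ, (w₁ t * q - w₂ t * p) := by
      apply intervalIntegral.intervalIntegral_pos_of_pos_on hint1 _ hφ0
      intro x hx
      have hlt : Real.sin x ^ 2 < Real.sin φ ^ 2 := sin_sq_smono hx.1.le hx.2 hφ.le
      have := ratio_lt hm10 h12 h21 (sq_nonneg (Real.sin x)) hlt hsinb
      simp only [hw₁, hw₂, hp, hq]
      nlinarith [this]
    have heq : ∫ t in (0:ℝ)..φ, (w₁ t * q - w₂ t * p) = A * q - B * p := by
      rw [intervalIntegral.integral_sub (f := fun t => w₁ t * q) (g := fun t => w₂ t * p) (((w_cont hm10 hm11).mul continuous_const).intervalIntegrable 0 φ)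
        (((w_cont hm20 h21).mul continuous_const).intervalIntegrable 0 φ),
        intervalIntegral.integral_mul_const, intervalIntegral.integral_mul_const]
      rfl
    linarith [heq ▸ hpos]
  have h2 : C * q ≤ D * p := by
    have hmono : ∫ t in φ..(π/2), w₁ t * q ≤ ∫ t in φ..(π/2), w₂ t * p := by
      apply intervalIntegral.integral_mono_on hφ.le
        (((w_cont hm10 hm11).mul continuous_const).intervalIntegrable φ (π/2))
        (((w_cont hm20 h21).mul continuous_const).intervalIntegrable φ (π/2))
      intro x hx
      have hle : Real.sin φ ^ 2 ≤ Real.sin x ^ 2 := sin_sq_mono hφ0.le hx.1 hx.2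
      have := ratio_le hm10 h12.le h21 (sq_nonneg (Real.sin φ)) hle (Real.sin_sq_le_one x)
      show w₁ x * q ≤ w₂ x * p
      simp only [hw₁, hw₂, hp, hq]
      nlinarith [this]
    rw [intervalIntegral.integral_mul_const, intervalIntegral.integral_mul_const] at hmono
    exact hmono
  -- combine: B*C < A*D
  have hBC : B * C < A * D := by
    have hBpos : 0 < B :=
      lt_of_lt_of_le (by rw [← amF_zero (m := m₂)]; exact amF_strictMono hm20 h21 hφ0) le_rfl
    nlinarith [mul_lt_mul_of_pos_right h1 hCpos, mul_le_mul_of_nonneg_left h2 hApos.le]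
  rw [hKA, hKB]
  nlinarith
lemma u_mem {θbar : ℝ} (hθ : θbar ∈ Set.Ioo 0 (π / 2)) (hm : m ∈ Set.Ioo 0 1) :
    0 < θbar * (2 * ellK m) / π ∧ θbar * (2 * ellK m) / π < ellK m := by
  have hK := ellK_pos hm.1.le hm.2
  have hπ := Real.pi_pos
  have hθ0 := hθ.1
  have hθ1 := hθ.2
  constructor
  · positivity
  · rw [div_lt_iff₀ hπ]
    nlinarith

lemma sin_am_mem {θbar : ℝ} (hθ : θbar ∈ Set.Ioo 0 (π / 2)) (hm : m ∈ Set.Ioo 0 1) :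
    Real.sin (am m (θbar * (2 * ellK m) / π)) ∈ Set.Ioo 0 1 := by
  obtain ⟨hu0, hu1⟩ := u_mem hθ hm
  obtain ⟨ha0, ha1⟩ := am_mem_Ioo hm.1.le hm.2 hu0 hu1
  have hπ := Real.pi_pos
  constructor
  · exact Real.sin_pos_of_pos_of_lt_pi ha0 (by nlinarith)
  · have h := Real.strictMonoOn_sin (a := am m (θbar * (2 * ellK m) / π)) (b := π/2)
      ⟨by nlinarith, by nlinarith⟩ ⟨by nlinarith, le_rfl⟩ ha1
    simpa using h

lemma am_lt_of_lt {θbar : ℝ} (hθ : θbar ∈ Set.Ioo 0 (π / 2)) (hm : m ∈ Set.Ioo 0 1)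
    {φ₀ : ℝ} (h : amF m φ₀ < θbar * (2 * ellK m) / π) :
    φ₀ < am m (θbar * (2 * ellK m) / π) := by
  have hF := amF_am hm.1.le hm.2 (θbar * (2 * ellK m) / π)
  have := (amF_strictMono hm.1.le hm.2).lt_iff_lt
    (a := φ₀) (b := am m (θbar * (2 * ellK m) / π))
  rw [hF] at this
  exact this.1 h

/-- The quantity `q(m) = √m · sn(cK|m)`. -/
noncomputable def qf (θbar m : ℝ) : ℝ :=
  Real.sqrt m * Real.sin (am m (θbar * (2 * ellK m) / π))

lemma qf_mem {θbar : ℝ} (hθ : θbar ∈ Set.Ioo 0 (π / 2)) (hm : m ∈ Set.Ioo 0 1) :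
    qf θbar m ∈ Set.Ioo 0 1 := by
  obtain ⟨hs0, hs1⟩ := sin_am_mem hθ hm
  have hκ0 : 0 < Real.sqrt m := Real.sqrt_pos.2 hm.1
  have hκ1 : Real.sqrt m < 1 := by
    rw [show (1:ℝ) = Real.sqrt 1 by simp]
    exact Real.sqrt_lt_sqrt hm.1.le hm.2
  constructor
  · show 0 < Real.sqrt m * Real.sin _
    positivity
  · show Real.sqrt m * Real.sin _ < 1
    nlinarith

lemma Jrec_eq {θbar : ℝ} (hθ : θbar ∈ Set.Ioo 0 (π / 2)) (hm : m ∈ Set.Ioo 0 1) :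
    Jrec θbar m = (1 / 4) * Real.log ((1 + qf θbar m) / (1 - qf θbar m)) := by
  obtain ⟨hs0, hs1⟩ := sin_am_mem hθ hm
  obtain ⟨hq0, hq1⟩ := qf_mem hθ hm
  set s := Real.sin (am m (θbar * (2 * ellK m) / π)) with hs
  set κq := qf θbar m with hqdef
  have hmq : m * s ^ 2 = κq ^ 2 := by
    rw [hqdef, qf, ← hs, mul_pow, Real.sq_sqrt hm.1.le]
  have hdn : Real.sqrt (1 - m * s ^ 2) = Real.sqrt (1 - κq) * Real.sqrt (1 + κq) := by
    rw [← Real.sqrt_mul (by linarith)]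
    congr 1
    nlinarith
  have hJ : Jrec θbar m = (1 / 2) * Real.log ((1 + κq) / Real.sqrt (1 - m * s ^ 2)) := rfl
  rw [hJ, hdn]
  have hsp : 0 < Real.sqrt (1 + κq) := Real.sqrt_pos.2 (by linarith)
  have hsm : 0 < Real.sqrt (1 - κq) := Real.sqrt_pos.2 (by linarith)
  have e1 : (1 + κq) / (Real.sqrt (1 - κq) * Real.sqrt (1 + κq))
      = Real.sqrt (1 + κq) / Real.sqrt (1 - κq) := by
    rw [div_eq_div_iff (by positivity) hsm.ne']
    have h := Real.mul_self_sqrt (show (0:ℝ) ≤ 1 + κq by linarith)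
    linear_combination (-(Real.sqrt (1 - κq))) * h
  rw [e1, ← Real.sqrt_div (by linarith) (1 - κq),
    Real.log_sqrt (div_nonneg (by linarith) (by linarith))]
  ring

lemma logratio_lt {a b : ℝ} (ha : 0 ≤ a) (hab : a < b) (hb : b < 1) :
    Real.log ((1 + a) / (1 - a)) < Real.log ((1 + b) / (1 - b)) := by
  apply Real.log_lt_log (div_pos (by linarith) (by linarith))
  rw [div_lt_div_iff₀ (by linarith) (by linarith)]
  nlinarith

lemma qf_lt {θbar m₁ m₂ : ℝ} (hθ : θbar ∈ Set.Ioo 0 (π / 2))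
    (hm₁ : m₁ ∈ Set.Ioo 0 1) (hm₂ : m₂ ∈ Set.Ioo 0 1) (h12 : m₁ < m₂) :
    qf θbar m₁ < qf θbar m₂ := by
  obtain ⟨hu10, hu11⟩ := u_mem hθ hm₁
  obtain ⟨hu20, hu21⟩ := u_mem hθ hm₂
  set φ₁ := am m₁ (θbar * (2 * ellK m₁) / π) with hφ₁
  set φ₂ := am m₂ (θbar * (2 * ellK m₂) / π) with hφ₂
  obtain ⟨ha10, ha11⟩ := am_mem_Ioo hm₁.1.le hm₁.2 hu10 hu11
  obtain ⟨ha20, ha21⟩ := am_mem_Ioo hm₂.1.le hm₂.2 hu20 hu21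
  have hF1 : amF m₁ φ₁ = θbar * (2 * ellK m₁) / π := amF_am hm₁.1.le hm₁.2 _
  have hF2 : amF m₂ φ₂ = θbar * (2 * ellK m₂) / π := amF_am hm₂.1.le hm₂.2 _
  have hK1 := ellK_pos hm₁.1.le hm₁.2
  have hK2 := ellK_pos hm₂.1.le hm₂.2
  have hπ := Real.pi_pos
  have hφlt : φ₁ < φ₂ := by
    by_contra hcon
    push_neg at hcon
    have e1 : amF m₂ φ₂ ≤ amF m₂ φ₁ :=
      (amF_strictMono hm₂.1.le hm₂.2).monotone hcon
    have e2 : amF m₂ φ₁ * ellK m₁ < amF m₁ φ₁ * ellK m₂ :=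
      key_lt hm₁.1 h12 hm₂.2 ha10 ha11
    rw [hF1] at e2
    rw [hF2] at e1
    have e3 : (θbar * (2 * ellK m₂) / π) * ellK m₁ ≤ amF m₂ φ₁ * ellK m₁ :=
      mul_le_mul_of_nonneg_right e1 hK1.le
    have hne : (θbar * (2 * ellK m₂) / π) * ellK m₁ = (θbar * (2 * ellK m₁) / π) * ellK m₂ := by
      ring
    rw [hne] at e3
    linarith
  have hsin : Real.sin φ₁ < Real.sin φ₂ :=
    Real.strictMonoOn_sin ⟨by nlinarith, by nlinarith⟩ ⟨by nlinarith, by nlinarith⟩ hφlt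
  have hsin1 : 0 < Real.sin φ₁ := Real.sin_pos_of_pos_of_lt_pi ha10 (by nlinarith)
  have hκ : Real.sqrt m₁ < Real.sqrt m₂ := Real.sqrt_lt_sqrt hm₁.1.le h12
  have hκ1 : 0 < Real.sqrt m₁ := Real.sqrt_pos.2 hm₁.1
  show Real.sqrt m₁ * Real.sin φ₁ < Real.sqrt m₂ * Real.sin φ₂
  nlinarith

lemma ellK_lower (hm0 : 0 < m) (hm1 : m < 1) :
    Real.log (Real.sqrt (1 - m) + π / 2) - Real.log (Real.sqrt (1 - m)) ≤ ellK m := by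
  set ε := Real.sqrt (1 - m) with hε
  have hε0 : 0 < ε := Real.sqrt_pos.2 (by linarith)
  have hε2 : ε ^ 2 = 1 - m := Real.sq_sqrt (by linarith)
  have hπ := Real.pi_pos
  have hcontOn : ContinuousOn (fun t => 1 / (ε + π / 2 - t)) (Set.Icc 0 (π/2)) := by
    apply ContinuousOn.div continuousOn_const (by fun_prop)
    intro t ht
    have := ht.2
    intro hcon
    nlinarith [ht.1, ht.2]
  have hintRHS : IntervalIntegrable (fun t => 1 / (ε + π / 2 - t))
      MeasureTheory.volume 0 (π/2) := by
    have huIcc : Set.uIcc (0:ℝ) (π/2) = Set.Icc 0 (π/2) := Set.uIcc_of_le (by positivity)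
    exact (huIcc ▸ hcontOn).intervalIntegrable
  have hpt : ∀ t ∈ Set.Icc (0:ℝ) (π/2),
      1 / (ε + π / 2 - t) ≤ 1 / Real.sqrt (1 - m * Real.sin t ^ 2) := by
    intro t ht
    have hc0 : 0 ≤ Real.cos t := Real.cos_nonneg_of_mem_Icc ⟨by nlinarith [ht.1], ht.2⟩
    have h1 : Real.sqrt (1 - m * Real.sin t ^ 2) ≤ ε + Real.cos t := by
      have hsq : 1 - m * Real.sin t ^ 2 ≤ (ε + Real.cos t) ^ 2 := by
        nlinarith [Real.sin_sq_add_cos_sq t, sq_nonneg (Real.cos t), sq_nonneg (Real.sin t)]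
      calc Real.sqrt (1 - m * Real.sin t ^ 2) ≤ Real.sqrt ((ε + Real.cos t) ^ 2) :=
            Real.sqrt_le_sqrt hsq
        _ = ε + Real.cos t := Real.sqrt_sq (by positivity)
    have h2 : Real.cos t ≤ π / 2 - t := by
      rw [← Real.sin_pi_div_two_sub]
      exact Real.sin_le (by linarith [ht.2])
    exact one_div_le_one_div_of_le (Real.sqrt_pos.2 (base_pos hm0.le hm1 t)) (by linarith)
  have hmono : ∫ t in (0:ℝ)..(π/2), 1 / (ε + π / 2 - t) ≤ ellK m :=
    intervalIntegral.integral_mono_on (by positivity) hintRHS (w_intable hm0.le hm1 0 (π/2)) hpt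
  have hval : ∫ t in (0:ℝ)..(π/2), 1 / (ε + π / 2 - t)
      = Real.log (ε + π / 2) - Real.log ε := by
    have h := intervalIntegral.integral_comp_sub_left (a := (0:ℝ)) (b := π/2)
      (fun x => 1 / x) (ε + π / 2)
    rw [show ε + π/2 - π/2 = ε by ring, show ε + π/2 - 0 = ε + π/2 by ring] at h
    have h0 : (0:ℝ) ∉ Set.uIcc ε (ε + π/2) := by
      rw [Set.uIcc_of_le (by linarith)]
      intro hcon
      exact absurd hcon.1 (by linarith)
    rw [h, integral_one_div h0, Real.log_div (by positivity) (ne_of_gt hε0)]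
  linarith [hval ▸ hmono]

lemma sqrt_one_sub_tendsto :
    Tendsto (fun m : ℝ => Real.sqrt (1 - m)) (nhdsWithin 1 (Set.Iio 1))
      (nhdsWithin 0 (Set.Ioi 0)) := by
  apply tendsto_nhdsWithin_of_tendsto_nhds_of_eventually_within
  · have hc : Continuous fun m : ℝ => Real.sqrt (1 - m) :=
      Real.continuous_sqrt.comp (continuous_const.sub continuous_id)
    have h : Filter.Tendsto (fun m : ℝ => Real.sqrt (1 - m)) (nhdsWithin 1 (Set.Iio 1))
        (nhds (Real.sqrt (1 - 1))) := (hc.tendsto 1).mono_left nhdsWithin_le_nhds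
    simpa using h
  · filter_upwards [self_mem_nhdsWithin] with x hx
    simp only [Set.mem_Iio] at hx
    exact Real.sqrt_pos.2 (by linarith)

lemma ellK_tendsto_atTop : Tendsto ellK (nhdsWithin 1 (Set.Iio 1)) atTop := by
  have hev : ∀ᶠ m in nhdsWithin 1 (Set.Iio 1), m ∈ Set.Ioo (0:ℝ) 1 :=
    Ioo_mem_nhdsLT_of_mem ⟨zero_lt_one, le_rfl⟩
  apply tendsto_atTop_mono' _ (hev.mono fun m hm => ellK_lower hm.1 hm.2)
  have hπ := Real.pi_pos
  have h1 : Tendsto (fun m : ℝ => Real.log (Real.sqrt (1 - m) + π / 2))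
      (nhdsWithin 1 (Set.Iio 1)) (nhds (Real.log (π / 2))) := by
    have hc : ContinuousAt Real.log (0 + π/2) := Real.continuousAt_log (by positivity)
    have := hc.tendsto.comp ((sqrt_one_sub_tendsto.mono_right nhdsWithin_le_nhds).add
      tendsto_const_nhds)
    simpa [Function.comp_def] using this
  have h2 : Tendsto (fun m : ℝ => -Real.log (Real.sqrt (1 - m)))
      (nhdsWithin 1 (Set.Iio 1)) atTop := by
    have := Real.tendsto_log_nhdsGT_zero.comp sqrt_one_sub_tendsto
    exact tendsto_neg_atBot_atTop.comp this
  have := h1.add_atTop h2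
  exact this.congr fun m => by ring

lemma amF_le_sec (hm0 : 0 ≤ m) (hm1 : m < 1) {a : ℝ} (ha0 : 0 ≤ a) (ha : a < π / 2) :
    amF m a ≤ ∫ t in (0:ℝ)..a, 1 / Real.cos t := by
  have hπ := Real.pi_pos
  have hcos : ∀ t ∈ Set.Icc (0:ℝ) a, 0 < Real.cos t := fun t ht =>
    Real.cos_pos_of_mem_Ioo ⟨by nlinarith [ht.1], lt_of_le_of_lt ht.2 ha⟩
  have hcontOn : ContinuousOn (fun t => 1 / Real.cos t) (Set.Icc 0 a) :=
    ContinuousOn.div continuousOn_const (Real.continuous_cos.continuousOn)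
      fun t ht => ne_of_gt (hcos t ht)
  have hint : IntervalIntegrable (fun t => 1 / Real.cos t) MeasureTheory.volume 0 a := by
    have huIcc : Set.uIcc (0:ℝ) a = Set.Icc 0 a := Set.uIcc_of_le ha0
    exact (huIcc ▸ hcontOn).intervalIntegrable
  apply intervalIntegral.integral_mono_on ha0 (w_intable hm0 hm1 0 a) hint
  intro t ht
  apply one_div_le_one_div_of_le (hcos t ht)
  calc Real.cos t = Real.sqrt (Real.cos t ^ 2) := (Real.sqrt_sq (hcos t ht).le).symm
    _ ≤ Real.sqrt (1 - m * Real.sin t ^ 2) := by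
        apply Real.sqrt_le_sqrt
        nlinarith [Real.sin_sq_add_cos_sq t, sq_nonneg (Real.sin t)]

lemma u_tendsto_atTop {θbar : ℝ} (hθ : θbar ∈ Set.Ioo 0 (π / 2)) :
    Tendsto (fun m => θbar * (2 * ellK m) / π) (nhdsWithin 1 (Set.Iio 1)) atTop := by
  have hπ := Real.pi_pos
  have h := ellK_tendsto_atTop.const_mul_atTop
    (show (0:ℝ) < 2 * θbar / π by have := hθ.1; positivity)
  exact h.congr fun m => by ring

lemma am_tendsto {θbar : ℝ} (hθ : θbar ∈ Set.Ioo 0 (π / 2)) :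
    Tendsto (fun m => am m (θbar * (2 * ellK m) / π)) (nhdsWithin 1 (Set.Iio 1))
      (nhds (π / 2)) := by
  have hπ := Real.pi_pos
  have hev : ∀ᶠ m in nhdsWithin 1 (Set.Iio 1), m ∈ Set.Ioo (0:ℝ) 1 :=
    Ioo_mem_nhdsLT_of_mem ⟨zero_lt_one, le_rfl⟩
  rw [tendsto_order]
  constructor
  · intro a ha
    rcases le_or_gt a 0 with h0 | h0
    · filter_upwards [hev] with m hm
      obtain ⟨hu0, hu1⟩ := u_mem hθ hm
      exact lt_of_le_of_lt h0 (am_mem_Ioo hm.1.le hm.2 hu0 hu1).1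
    · have hM := (u_tendsto_atTop hθ).eventually_gt_atTop (∫ t in (0:ℝ)..a, 1 / Real.cos t)
      filter_upwards [hev, hM] with m hm hMm
      apply am_lt_of_lt hθ hm
      exact lt_of_le_of_lt (amF_le_sec hm.1.le hm.2 h0.le ha) hMm
  · intro a ha
    filter_upwards [hev] with m hm
    obtain ⟨hu0, hu1⟩ := u_mem hθ hm
    exact lt_trans (am_mem_Ioo hm.1.le hm.2 hu0 hu1).2 ha

lemma qf_tendsto_one {θbar : ℝ} (hθ : θbar ∈ Set.Ioo 0 (π / 2)) :
    Tendsto (fun m => qf θbar m) (nhdsWithin 1 (Set.Iio 1)) (nhds 1) := by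
  have h1 : Tendsto (fun m : ℝ => Real.sqrt m) (nhdsWithin 1 (Set.Iio 1)) (nhds 1) := by
    have h : Tendsto (fun m : ℝ => Real.sqrt m) (nhdsWithin 1 (Set.Iio 1))
        (nhds (Real.sqrt 1)) := (Real.continuous_sqrt.tendsto 1).mono_left nhdsWithin_le_nhds
    simpa using h
  have h2 : Tendsto (fun m => Real.sin (am m (θbar * (2 * ellK m) / π)))
      (nhdsWithin 1 (Set.Iio 1)) (nhds 1) := by
    have := (Real.continuous_sin.tendsto (π/2)).comp (am_tendsto hθ)
    simpa [Function.comp_def] using this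
  have := h1.mul h2
  simpa [qf] using this

lemma qf_tendsto_zero {θbar : ℝ} (hθ : θbar ∈ Set.Ioo 0 (π / 2)) :
    Tendsto (fun m => qf θbar m) (nhdsWithin 0 (Set.Ioi 0)) (nhds 0) := by
  have hev : ∀ᶠ m in nhdsWithin 0 (Set.Ioi 0), m ∈ Set.Ioo (0:ℝ) 1 :=
    Ioo_mem_nhdsGT_of_mem ⟨le_rfl, zero_lt_one⟩
  have hsq : Tendsto (fun m : ℝ => Real.sqrt m) (nhdsWithin 0 (Set.Ioi 0)) (nhds 0) := by
    have h : Tendsto (fun m : ℝ => Real.sqrt m) (nhdsWithin 0 (Set.Ioi 0))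
        (nhds (Real.sqrt 0)) := (Real.continuous_sqrt.tendsto 0).mono_left nhdsWithin_le_nhds
    simpa using h
  apply tendsto_of_tendsto_of_tendsto_of_le_of_le' tendsto_const_nhds hsq
  · filter_upwards [hev] with m hm
    exact (qf_mem hθ hm).1.le
  · filter_upwards [hev] with m hm
    obtain ⟨hs0, hs1⟩ := sin_am_mem hθ hm
    have : 0 ≤ Real.sqrt m := Real.sqrt_nonneg m
    calc qf θbar m = Real.sqrt m * Real.sin (am m (θbar * (2 * ellK m) / π)) := rfl
      _ ≤ Real.sqrt m * 1 := by nlinarith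
      _ = Real.sqrt m := mul_one _

end JrecAux

/-- For fixed `θ̄ ∈ (0,π/2)`, the reciprocal-regime coupling constant `J̃(θ̄|m)`
is strictly increasing in `m ∈ (0,1)`, tends to `0` as `m → 0⁺` and to `+∞` as
`m → 1⁻`; equivalently, as `k² = 1/m` increases from `1` to `+∞` the coupling
constant decreases from `+∞` to `0`. -/
theorem Jrec_monotone_range (θbar : ℝ) (hθ : θbar ∈ Set.Ioo 0 (π / 2)) :
    StrictMonoOn (fun m => Jrec θbar m) (Set.Ioo 0 1) ∧
    Filter.Tendsto (fun m => Jrec θbar m) (nhdsWithin 0 (Set.Ioi 0)) (nhds 0) ∧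
    Filter.Tendsto (fun m => Jrec θbar m) (nhdsWithin 1 (Set.Iio 1)) Filter.atTop := by
  refine ⟨?_, ?_, ?_⟩
  · intro m₁ hm₁ m₂ hm₂ h12
    simp only
    rw [JrecAux.Jrec_eq hθ hm₁, JrecAux.Jrec_eq hθ hm₂]
    have h := JrecAux.qf_lt hθ hm₁ hm₂ h12
    have h1 := JrecAux.qf_mem hθ hm₁
    have h2 := JrecAux.qf_mem hθ hm₂
    have hlog := JrecAux.logratio_lt h1.1.le h h2.2
    nlinarith
  · have hev : ∀ᶠ m in nhdsWithin (0:ℝ) (Set.Ioi 0), m ∈ Set.Ioo (0:ℝ) 1 :=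
      Ioo_mem_nhdsGT_of_mem ⟨le_rfl, zero_lt_one⟩
    have hq := JrecAux.qf_tendsto_zero hθ
    have hcont : ContinuousAt (fun x : ℝ => (1 / 4) * Real.log ((1 + x) / (1 - x))) 0 := by
      apply ContinuousAt.mul continuousAt_const
      apply ContinuousAt.log
      · exact ContinuousAt.div (by fun_prop) (by fun_prop) (by norm_num)
      · norm_num
    have htend := hcont.tendsto.comp hq
    have hval : (1 / 4 : ℝ) * Real.log ((1 + 0) / (1 - 0)) = 0 := by norm_num
    rw [hval] at htend
    apply htend.congr'
    filter_upwards [hev] with m hm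
    exact (JrecAux.Jrec_eq hθ hm).symm
  · have hev : ∀ᶠ m in nhdsWithin (1:ℝ) (Set.Iio 1), m ∈ Set.Ioo (0:ℝ) 1 :=
      Ioo_mem_nhdsLT_of_mem ⟨zero_lt_one, le_rfl⟩
    have hq := JrecAux.qf_tendsto_one hθ
    have hsub : Tendsto (fun m => 1 - JrecAux.qf θbar m) (nhdsWithin 1 (Set.Iio 1))
        (nhdsWithin 0 (Set.Ioi 0)) := by
      apply tendsto_nhdsWithin_of_tendsto_nhds_of_eventually_within
      · have := (tendsto_const_nhds (x := (1:ℝ))).sub hq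
        simpa using this
      · filter_upwards [hev] with m hm
        have := (JrecAux.qf_mem hθ hm).2
        simp only [Set.mem_Ioi]
        linarith
    have hinv : Tendsto (fun m => (1 - JrecAux.qf θbar m)⁻¹) (nhdsWithin 1 (Set.Iio 1))
        atTop := hsub.inv_tendsto_nhdsGT_zero
    have hnum : Tendsto (fun m => 1 + JrecAux.qf θbar m) (nhdsWithin 1 (Set.Iio 1))
        (nhds 2) := by
      have := (tendsto_const_nhds (x := (1:ℝ))).add hq
      norm_num at this
      exact this
    have hdiv : Tendsto (fun m => (1 + JrecAux.qf θbar m) / (1 - JrecAux.qf θbar m))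
        (nhdsWithin 1 (Set.Iio 1)) atTop := by
      have := hnum.pos_mul_atTop two_pos hinv
      exact this.congr fun m => (div_eq_mul_inv _ _).symm
    have hlog := Real.tendsto_log_atTop.comp hdiv
    have hfinal := hlog.const_mul_atTop (show (0:ℝ) < 1/4 by norm_num)
    apply hfinal.congr'
    filter_upwards [hev] with m hm
    exact (JrecAux.Jrec_eq hθ hm).symm
end
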